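/- Let X be a finite metric space satisfying P(J,p) at scale r (with p > 1), with J(r) > 0 and J(r) < r. Then every bi-Lipschitz embedding F of X into an L^p-space has distortion at least r/J(r); that is, c_p(X) ≥ r/J(r). -/

import Mathlib

open MeasureTheory Metric Set

lemma lpnorm_rpow_eq {Ω : Type} [MeasurableSpace Ω] (ν : Measure Ω) (p : ℝ) (hp : 1 < p)
    [Fact (1 ≤ ENNReal.ofReal p)] (f : Lp ℝ (ENNReal.ofReal p) ν) :
    ∫ ω, |f ω| ^ p ∂ν = ‖f‖ ^ p := by
  have hp0 : (0:ℝ) < p := lt_trans one_pos hp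
  have h0 : ENNReal.ofReal p ≠ 0 := by simp [ENNReal.ofReal_eq_zero]; linarith
  have htop : ENNReal.ofReal p ≠ ⊤ := ENNReal.ofReal_ne_top
  have htr : (ENNReal.ofReal p).toReal = p := ENNReal.toReal_ofReal hp0.le
  have hmem : MemLp (f : Ω → ℝ) (ENNReal.ofReal p) ν := Lp.memLp f
  have := hmem.eLpNorm_eq_integral_rpow_norm h0 htop
  rw [Lp.norm_def, this, htr, ENNReal.toReal_ofReal (by positivity)]
  rw [Real.rpow_inv_rpow (by positivity) hp0.ne']
  simp [Real.norm_eq_abs]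

/-- A finite metric space satisfying P(J,p) at scale `r` (with `0 < J r < r`) has
`L^p`-distortion at least `r / J r`: every bi-Lipschitz embedding `F` into an `L^p`-space
with `dist x y ≤ A·‖F x − F y‖` and `‖F x − F y‖ ≤ B·dist x y` satisfies `r / J r ≤ A·B`. -/
theorem stmt13 {X : Type*} [MetricSpace X] [Fintype X] [MeasurableSpace X] [BorelSpace X]
    (p r : ℝ) (hp : 1 < p) (hr : 0 < r)
    (J : ℝ → ℝ) (hJpos : 0 < J r) (hJr : J r < r)
    (P Q : Measure (X × X)) [IsProbabilityMeasure P] [IsProbabilityMeasure Q]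
    (hPsupp : P {z : X × X | r ≤ dist z.1 z.2}ᶜ = 0)
    (hQsupp : Q {z : X × X | 1 ≤ dist z.1 z.2}ᶜ = 0)
    (hPoincare : ∀ φ : X → ℝ,
      ∫ z, (|φ z.1 - φ z.2| / J r) ^ p ∂P ≤
        ∫ z, (|φ z.1 - φ z.2| / dist z.1 z.2) ^ p ∂Q) :
    ∀ {Ω : Type} [MeasurableSpace Ω] (ν : Measure Ω) [Fact (1 ≤ ENNReal.ofReal p)]
      (F : X → Lp ℝ (ENNReal.ofReal p) ν) (A B : ℝ), 0 < A → 0 < B →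
      (∀ x y : X, dist x y ≤ A * ‖F x - F y‖) →
      (∀ x y : X, ‖F x - F y‖ ≤ B * dist x y) →
      r / J r ≤ A * B := by
  intro Ω _ ν _ F A B hA hB hAF hFB
  have hp0 : (0:ℝ) < p := lt_trans one_pos hp
  have h0 : ENNReal.ofReal p ≠ 0 := by simp [ENNReal.ofReal_eq_zero]; linarith
  have htop : ENNReal.ofReal p ≠ ⊤ := ENNReal.ofReal_ne_top
  have htr : (ENNReal.ofReal p).toReal = p := ENNReal.toReal_ofReal hp0.le
  set g : X × X → Lp ℝ (ENNReal.ofReal p) ν := fun z => F z.1 - F z.2 with hg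
  set G : X × X → Ω → ℝ := fun z ω => |g z ω| ^ p with hG
  have hGint : ∀ z, Integrable (G z) ν := by
    intro z
    have := (Lp.memLp (g z)).integrable_norm_rpow h0 htop
    simpa [htr, Real.norm_eq_abs, hG] using this
  have hGval : ∀ z, ∫ ω, G z ω ∂ν = ‖g z‖ ^ p := fun z => lpnorm_rpow_eq ν p hp (g z)
  -- a.e. pointwise identification
  have hae : ∀ᵐ ω ∂ν, ∀ z : X × X, G z ω = |F z.1 ω - F z.2 ω| ^ p := by
    rw [MeasureTheory.ae_all_iff]
    intro z
    filter_upwards [Lp.coeFn_sub (F z.1) (F z.2)] with ω hω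
    simp only [hG, hg, hω, Pi.sub_apply]
  -- P-side a.e. support
  have hPae : ∀ᵐ z ∂P, r ≤ dist z.1 z.2 := by
    rw [MeasureTheory.ae_iff]
    rwa [Set.compl_setOf] at hPsupp
  have hQae : ∀ᵐ z ∂Q, 1 ≤ dist z.1 z.2 := by
    rw [MeasureTheory.ae_iff]
    rwa [Set.compl_setOf] at hQsupp
  -- the key inequality
  have key : ∫ z, (‖g z‖ / J r) ^ p ∂P ≤ ∫ z, (‖g z‖ / dist z.1 z.2) ^ p ∂Q := by
    have hL : ∫ z, (‖g z‖ / J r) ^ p ∂P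
        = ∫ ω, ∑ z : X × X, (P {z}).toReal * (G z ω / (J r) ^ p) ∂ν := by
      rw [integral_fintype (Integrable.of_finite), integral_finset_sum]
      · refine Finset.sum_congr rfl fun z _ => ?_
        rw [integral_const_mul, integral_div, hGval z, smul_eq_mul, measureReal_def,
          Real.div_rpow (norm_nonneg _) hJpos.le]
      · intro z _
        exact ((hGint z).div_const _).const_mul _
    have hR : ∫ z, (‖g z‖ / dist z.1 z.2) ^ p ∂Q
        = ∫ ω, ∑ z : X × X, (Q {z}).toReal * (G z ω / (dist z.1 z.2) ^ p) ∂ν := by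
      rw [integral_fintype (Integrable.of_finite), integral_finset_sum]
      · refine Finset.sum_congr rfl fun z _ => ?_
        rw [integral_const_mul, integral_div, hGval z, smul_eq_mul, measureReal_def,
          Real.div_rpow (norm_nonneg _) dist_nonneg]
      · intro z _
        exact ((hGint z).div_const _).const_mul _
    rw [hL, hR]
    refine integral_mono_ae ?_ ?_ ?_
    · exact integrable_finset_sum _ fun z _ => ((hGint z).div_const _).const_mul _
    · exact integrable_finset_sum _ fun z _ => ((hGint z).div_const _).const_mul _
    · filter_upwards [hae] with ω hω
      have hpoin := hPoincare (fun x => F x ω)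
      rw [integral_fintype (Integrable.of_finite), integral_fintype (Integrable.of_finite)]
        at hpoin
      calc ∑ z : X × X, (P {z}).toReal * (G z ω / (J r) ^ p)
          = ∑ z : X × X, (P {z}).toReal • ((|F z.1 ω - F z.2 ω|) / J r) ^ p := by
            refine Finset.sum_congr rfl fun z _ => ?_
            rw [smul_eq_mul, Real.div_rpow (abs_nonneg _) hJpos.le, hω z]
        _ ≤ ∑ z : X × X, (Q {z}).toReal • ((|F z.1 ω - F z.2 ω|) / dist z.1 z.2) ^ p := hpoin
        _ = ∑ z : X × X, (Q {z}).toReal * (G z ω / (dist z.1 z.2) ^ p) := by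
            refine Finset.sum_congr rfl fun z _ => ?_
            rw [smul_eq_mul, Real.div_rpow (abs_nonneg _) dist_nonneg, hω z]
  -- lower bound on LHS
  have hlow : (r / (A * J r)) ^ p ≤ ∫ z, (‖g z‖ / J r) ^ p ∂P := by
    have : ∫ z : X × X, (r / (A * J r)) ^ p ∂P = (r / (A * J r)) ^ p := by
      simp
    rw [← this]
    refine integral_mono_ae (integrable_const _) (Integrable.of_finite) ?_
    filter_upwards [hPae] with z hz
    have h1 : r / A ≤ ‖g z‖ := by
      rw [div_le_iff₀ hA]
      calc r ≤ dist z.1 z.2 := hz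
        _ ≤ A * ‖F z.1 - F z.2‖ := hAF z.1 z.2
        _ = ‖g z‖ * A := by rw [hg]; ring
    refine Real.rpow_le_rpow (by positivity) ?_ hp0.le
    rw [div_le_div_iff₀ (by positivity) hJpos]
    have h2 : r ≤ ‖g z‖ * A := (div_le_iff₀ hA).mp h1
    nlinarith [mul_le_mul_of_nonneg_right h2 hJpos.le]
  -- upper bound on RHS
  have hup : ∫ z, (‖g z‖ / dist z.1 z.2) ^ p ∂Q ≤ B ^ p := by
    have hconst : ∫ z : X × X, B ^ p ∂Q = B ^ p := by simp
    rw [← hconst]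
    refine integral_mono_ae (Integrable.of_finite) (integrable_const _) ?_
    filter_upwards [hQae] with z hz
    have hd : (0:ℝ) < dist z.1 z.2 := lt_of_lt_of_le one_pos hz
    refine Real.rpow_le_rpow (by positivity) ?_ hp0.le
    rw [div_le_iff₀ hd]
    calc ‖g z‖ = ‖F z.1 - F z.2‖ := rfl
      _ ≤ B * dist z.1 z.2 := hFB z.1 z.2
  have hfin : (r / (A * J r)) ^ p ≤ B ^ p := le_trans hlow (le_trans key hup)
  have hbase : r / (A * J r) ≤ B := by
    by_contra h
    push_neg at h
    exact absurd hfin (not_le.mpr (Real.rpow_lt_rpow hB.le h hp0))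
  rw [div_le_iff₀ (by positivity)] at hbase
  rw [div_le_iff₀ hJpos]
  nlinarith
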